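/- Let $a_1,\dots,a_n\in\mathbb{Z}^d$ span $\mathbb{R}^d$ and let $A$ be the Lawrence lifting, the $(n+d)\times 2n$ integer matrix (I_n I_n; 0 M). Then the matroid-complex Euler characteristic of the columns of $A$ equals that of $M=(a_1,\dots,a_n)$ in absolute value: $|\chi(A)| = |\chi(M)|$, where $\chi$ denotes $\sum_{I\text{ independent}}(-1)^{|I|}$ over the respective matroid complexes. -/

import Mathlib

/-- The 2n columns of the Lawrence lifting (Iₙ Iₙ; 0 M): the first n are
(eᵢ, 0), the second n are (eᵢ, aᵢ). -/
def lawrenceCol (d n : ℕ) (a : Fin n → (Fin d → ℤ)) :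
    Fin n ⊕ Fin n → (Fin n → ℚ) × (Fin d → ℚ) :=
  Sum.elim (fun i => (Pi.single i 1, 0))
    (fun i => (Pi.single i 1, fun r => (a i r : ℚ)))

/-- Linear independence of a finset-indexed subfamily, phrased with total
coefficient functions supported on the finset. -/
lemma indep_finset_iff {ι V : Type*} [Fintype ι] [DecidableEq ι]
    [AddCommGroup V] [Module ℚ V] (v : ι → V) (S : Finset ι) :
    LinearIndependent ℚ (fun s : S => v s.1) ↔
      ∀ C : ι → ℚ, (∀ i, i ∉ S → C i = 0) → (∑ i, C i • v i) = 0 → ∀ i, C i = 0 := by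
  rw [Fintype.linearIndependent_iff]
  constructor
  · intro h C hC0 hsum i
    by_cases hi : i ∈ S
    · have hsum' : ∑ s : S, C s.1 • v s.1 = 0 := by
        rw [Finset.univ_eq_attach, Finset.sum_attach S (fun i => C i • v i), ← hsum]
        exact Finset.sum_subset (Finset.subset_univ S)
          (fun x _ hx => by rw [hC0 x hx, zero_smul])
      exact h (fun s => C s.1) hsum' ⟨i, hi⟩
    · exact hC0 i hi
  · intro h g hsum s
    classical
    have h0 : ∀ i, i ∉ S →
        (if h : i ∈ S then g ⟨i, h⟩ else 0) = (0 : ℚ) := fun i hi => dif_neg hi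
    have hs : ∑ i, (if h : i ∈ S then g ⟨i, h⟩ else 0) • v i = 0 := by
      have h1 : ∑ i, (if h : i ∈ S then g ⟨i, h⟩ else 0) • v i
          = ∑ i ∈ S, (if h : i ∈ S then g ⟨i, h⟩ else 0) • v i :=
        (Finset.sum_subset (Finset.subset_univ S)
          (fun x _ hx => by rw [h0 x hx, zero_smul])).symm
      have h2 : ∑ i ∈ S, (if h : i ∈ S then g ⟨i, h⟩ else 0) • v i
          = ∑ s : S, g s • v s.1 := by
        rw [← Finset.sum_attach S (fun i => (if h : i ∈ S then g ⟨i, h⟩ else 0) • v i),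
          Finset.univ_eq_attach]
        refine Finset.sum_congr rfl fun x _ => ?_
        rw [dif_pos x.2]
      rw [h1, h2]
      exact hsum
    have hfin : (if h : (s : ι) ∈ S then g ⟨s, h⟩ else 0) = 0 :=
      h (fun i => if h : i ∈ S then g ⟨i, h⟩ else 0) h0 hs s.1
    rwa [dif_pos s.2] at hfin

lemma lawrence_sum (d n : ℕ) (a : Fin n → (Fin d → ℤ)) (C : Fin n ⊕ Fin n → ℚ) :
    ∑ s, C s • lawrenceCol d n a s =
      ((fun j => C (Sum.inl j) + C (Sum.inr j)),
        ∑ j, C (Sum.inr j) • (fun r => (a j r : ℚ))) := by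
  rw [Fintype.sum_sum_type]
  unfold lawrenceCol
  simp only [Sum.elim_inl, Sum.elim_inr, Prod.smul_mk, smul_zero]
  apply Prod.ext
  · simp only [Prod.fst_add, Prod.fst_sum]
    funext j
    simp [Pi.single_apply, Finset.sum_ite_eq', mul_comm]
  · simp only [Prod.snd_add, Prod.snd_sum]
    simp

lemma lawrence_indep_iff (d n : ℕ) (a : Fin n → (Fin d → ℤ))
    (S : Finset (Fin n ⊕ Fin n)) :
    LinearIndependent ℚ (fun s : S => lawrenceCol d n a s.1) ↔
      LinearIndependent ℚ
        (fun i : (S.toLeft ∩ S.toRight : Finset (Fin n)) =>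
          fun r : Fin d => (a i.1 r : ℚ)) := by
  rw [indep_finset_iff (lawrenceCol d n a) S,
    indep_finset_iff (fun i : Fin n => fun r : Fin d => (a i r : ℚ)) (S.toLeft ∩ S.toRight)]
  constructor
  · intro h μ hμ0 hsum i
    set C : Fin n ⊕ Fin n → ℚ := Sum.elim (fun j => -μ j) μ with hC
    have hsupp : ∀ s, s ∉ S → C s = 0 := by
      rintro (j | j) hs
      · simp only [hC, Sum.elim_inl, neg_eq_zero]
        by_contra hne
        have hmem : j ∈ S.toLeft ∩ S.toRight := by
          by_contra h'; exact hne (hμ0 j h')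
        exact hs (Finset.mem_toLeft.mp (Finset.mem_inter.mp hmem).1)
      · simp only [hC, Sum.elim_inr]
        by_contra hne
        have hmem : j ∈ S.toLeft ∩ S.toRight := by
          by_contra h'; exact hne (hμ0 j h')
        exact hs (Finset.mem_toRight.mp (Finset.mem_inter.mp hmem).2)
    have hCsum : ∑ s, C s • lawrenceCol d n a s = 0 := by
      rw [lawrence_sum]
      refine Prod.ext ?_ ?_
      · funext j; simp [hC]
      · simpa [hC] using hsum
    have := h C hsupp hCsum (Sum.inr i)
    simpa [hC] using this
  · intro h C hC0 hsum s
    rw [lawrence_sum] at hsum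
    have hfst : (fun j => C (Sum.inl j) + C (Sum.inr j)) = (0 : Fin n → ℚ) :=
      congrArg Prod.fst hsum
    have hsnd : ∑ j, C (Sum.inr j) • (fun r => (a j r : ℚ)) = (0 : Fin d → ℚ) :=
      congrArg Prod.snd hsum
    have hr : ∀ i, C (Sum.inr i) = 0 := by
      apply h (fun i => C (Sum.inr i)) ?_ hsnd
      intro i hi
      by_contra hne
      apply hi
      rw [Finset.mem_inter, Finset.mem_toLeft, Finset.mem_toRight]
      constructor
      · by_contra hl
        have h1 : C (Sum.inl i) = 0 := hC0 _ hl
        have h2 := congrFun hfst i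
        simp only [h1, zero_add, Pi.zero_apply] at h2
        exact hne h2
      · by_contra hr'
        exact hne (hC0 _ hr')
    have hl : ∀ i, C (Sum.inl i) = 0 := by
      intro i
      have h2 := congrFun hfst i
      simp only [hr i, add_zero, Pi.zero_apply] at h2
      exact h2
    cases s with
    | inl j => exact hl j
    | inr j => exact hr j

lemma lawrence_indep_iff' (d n : ℕ) (a : Fin n → (Fin d → ℤ))
    (L R : Finset (Fin n)) :
    LinearIndependent ℚ (fun s : (L.disjSum R : Finset (Fin n ⊕ Fin n)) =>
        lawrenceCol d n a s.1) ↔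
      LinearIndependent ℚ
        (fun i : (L ∩ R : Finset (Fin n)) => fun r : Fin d => (a i.1 r : ℚ)) := by
  have := lawrence_indep_iff d n a (L.disjSum R)
  rwa [Finset.toLeft_disjSum, Finset.toRight_disjSum] at this

lemma sum_powerset_disjSum {α β M : Type*} [DecidableEq α] [DecidableEq β]
    [Fintype α] [Fintype β] [AddCommMonoid M] (F : Finset (α ⊕ β) → M) :
    ∑ S ∈ (Finset.univ : Finset (α ⊕ β)).powerset, F S =
      ∑ L ∈ (Finset.univ : Finset α).powerset,
        ∑ R ∈ (Finset.univ : Finset β).powerset, F (L.disjSum R) := by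
  rw [← Finset.sum_product']
  refine Finset.sum_nbij' (fun S => (S.toLeft, S.toRight))
    (fun p => p.1.disjSum p.2) ?_ ?_ ?_ ?_ ?_
  · intro S _; simp [Finset.mem_product]
  · intro p _; simp
  · intro S _; exact Finset.toLeft_disjSum_toRight
  · intro p _; simp
  · intro S _
    show F S = F (S.toLeft.disjSum S.toRight)
    rw [Finset.toLeft_disjSum_toRight]

lemma sum_powerset_union_disjoint {α M : Type*} [DecidableEq α] [AddCommMonoid M]
    {s t : Finset α} (h : Disjoint s t) (g : Finset α → M) :
    ∑ R ∈ (s ∪ t).powerset, g R =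
      ∑ B ∈ s.powerset, ∑ C ∈ t.powerset, g (B ∪ C) := by
  rw [← Finset.sum_product']
  refine Finset.sum_nbij' (fun R => (R ∩ s, R ∩ t)) (fun p => p.1 ∪ p.2) ?_ ?_ ?_ ?_ ?_
  · intro R _
    simp [Finset.mem_product, Finset.inter_subset_right]
  · intro p hp
    simp only [Finset.mem_product, Finset.mem_powerset] at hp
    rw [Finset.mem_powerset]
    exact Finset.union_subset_union hp.1 hp.2
  · intro R hR
    rw [Finset.mem_powerset] at hR
    show R ∩ s ∪ R ∩ t = R
    rw [← Finset.inter_union_distrib_left, Finset.inter_eq_left.mpr hR]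
  · intro p hp
    simp only [Finset.mem_product, Finset.mem_powerset] at hp
    have h1 : (p.1 ∪ p.2) ∩ s = p.1 := by
      rw [Finset.union_inter_distrib_right, Finset.inter_eq_left.mpr hp.1,
        Finset.disjoint_iff_inter_eq_empty.mp (h.symm.mono_left hp.2),
        Finset.union_empty]
    have h2 : (p.1 ∪ p.2) ∩ t = p.2 := by
      rw [Finset.union_inter_distrib_right, Finset.inter_eq_left.mpr hp.2,
        Finset.disjoint_iff_inter_eq_empty.mp (h.mono_left hp.1),
        Finset.empty_union]
    show ((p.1 ∪ p.2) ∩ s, (p.1 ∪ p.2) ∩ t) = p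
    rw [h1, h2]
  · intro R hR
    rw [Finset.mem_powerset] at hR
    show g R = g (R ∩ s ∪ R ∩ t)
    rw [← Finset.inter_union_distrib_left, Finset.inter_eq_left.mpr hR]

open Classical in
/-- The matroid-complex Euler characteristic of the Lawrence lifting equals
that of M = (a₁,...,aₙ) in absolute value. -/
theorem stmt_19 (d n : ℕ) (a : Fin n → (Fin d → ℤ))
    (hspan : Submodule.span ℝ (Set.range (fun i : Fin n => fun r : Fin d => (a i r : ℝ))) = ⊤) :
    |∑ S ∈ (Finset.univ : Finset (Fin n ⊕ Fin n)).powerset,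
        (if LinearIndependent ℚ (fun s : S => lawrenceCol d n a s.1)
          then (-1 : ℤ) ^ S.card else 0)|
      = |∑ I ∈ (Finset.univ : Finset (Fin n)).powerset,
          (if LinearIndependent ℚ (fun i : I => fun r : Fin d => (a i.1 r : ℚ))
            then (-1 : ℤ) ^ I.card else 0)| := by
  classical
  set g : Finset (Fin n) → ℤ := fun T =>
    if LinearIndependent ℚ (fun i : T => fun r : Fin d => (a i.1 r : ℚ)) then 1 else 0
    with hg
  have key : ∑ S ∈ (Finset.univ : Finset (Fin n ⊕ Fin n)).powerset,
        (if LinearIndependent ℚ (fun s : S => lawrenceCol d n a s.1)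
          then (-1 : ℤ) ^ S.card else 0)
      = (-1 : ℤ) ^ n * ∑ I ∈ (Finset.univ : Finset (Fin n)).powerset,
          (-1 : ℤ) ^ I.card * g I := by
    rw [sum_powerset_disjSum]
    have step1 : ∀ L ∈ (Finset.univ : Finset (Fin n)).powerset,
        (∑ R ∈ (Finset.univ : Finset (Fin n)).powerset,
          (if LinearIndependent ℚ
              (fun s : (L.disjSum R : Finset (Fin n ⊕ Fin n)) => lawrenceCol d n a s.1)
            then (-1 : ℤ) ^ (L.disjSum R).card else 0))
        = (-1 : ℤ) ^ L.card *
            ∑ R ∈ (Finset.univ : Finset (Fin n)).powerset, (-1 : ℤ) ^ R.card * g (L ∩ R) := by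
      intro L _
      rw [Finset.mul_sum]
      refine Finset.sum_congr rfl fun R _ => ?_
      rw [if_congr (lawrence_indep_iff' d n a L R) rfl rfl, Finset.card_disjSum, pow_add]
      simp only [hg]
      by_cases hind : LinearIndependent ℚ
          (fun i : (L ∩ R : Finset (Fin n)) => fun r : Fin d => (a i.1 r : ℚ))
      · rw [if_pos hind, if_pos hind, mul_one]
      · rw [if_neg hind, if_neg hind, mul_zero, mul_zero]
    rw [Finset.sum_congr rfl step1]
    have step2 : ∀ L : Finset (Fin n),
        (∑ R ∈ (Finset.univ : Finset (Fin n)).powerset, (-1 : ℤ) ^ R.card * g (L ∩ R))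
        = (∑ B ∈ L.powerset, (-1 : ℤ) ^ B.card * g B) *
            (if Lᶜ = (∅ : Finset (Fin n)) then 1 else 0) := by
      intro L
      rw [show (Finset.univ : Finset (Fin n)) = L ∪ Lᶜ from (Finset.union_compl L).symm,
        sum_powerset_union_disjoint disjoint_compl_right,
        ← Finset.sum_powerset_neg_one_pow_card (x := Lᶜ), Finset.sum_mul_sum]
      refine Finset.sum_congr rfl fun B hB => Finset.sum_congr rfl fun C hC => ?_
      rw [Finset.mem_powerset] at hB hC
      have hdisj : Disjoint B C := disjoint_compl_right.mono hB hC
      have hLBC : L ∩ (B ∪ C) = B := by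
        rw [Finset.inter_union_distrib_left, Finset.inter_eq_right.mpr hB,
          Finset.disjoint_iff_inter_eq_empty.mp (disjoint_compl_right.mono_right hC),
          Finset.union_empty]
      rw [hLBC, Finset.card_union_of_disjoint hdisj, pow_add]
      ring
    have step3 : ∀ L ∈ (Finset.univ : Finset (Fin n)).powerset,
        (-1 : ℤ) ^ L.card *
            (∑ R ∈ (Finset.univ : Finset (Fin n)).powerset, (-1 : ℤ) ^ R.card * g (L ∩ R))
        = if L = Finset.univ then
            (-1 : ℤ) ^ L.card * ∑ B ∈ L.powerset, (-1 : ℤ) ^ B.card * g B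
          else 0 := by
      intro L _
      rw [step2 L]
      by_cases hL : L = Finset.univ
      · simp [Finset.compl_eq_empty_iff, hL]
      · simp [Finset.compl_eq_empty_iff, hL]
    rw [Finset.sum_congr rfl step3, Finset.sum_ite_eq' _ Finset.univ]
    simp [Finset.card_univ]
  rw [key, abs_mul, abs_pow, abs_neg, abs_one, one_pow, one_mul]
  congr 1
  refine Finset.sum_congr rfl fun I _ => ?_
  simp only [hg]
  by_cases hind : LinearIndependent ℚ (fun i : I => fun r : Fin d => (a i.1 r : ℚ))
  · rw [if_pos hind, if_pos hind, mul_one]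
  · rw [if_neg hind, if_neg hind, mul_zero]
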